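/- (Content of the proof of Theorem 5) A finite set B of terms in CQ normal form covers Cantor space if and only if no shift is bad for B. -/

import Mathlib

/-- Terms of the free (quasi-)Cartesian monoid: constants `I, L, R`,
composition `comp` (written `*` in the paper) and pairing `pair`. -/
inductive Term : Type
  | I : Term
  | L : Term
  | R : Term
  | comp : Term → Term → Term
  | pair : Term → Term → Term
  deriving DecidableEq

open Term

/-- The rewrite rules (1)-(7), indexed by their number. -/
inductive Rule : ℕ → Term → Term → Prop
  | r1 (x y : Term) : Rule 1 (comp L (pair x y)) x
  | r2 (x y : Term) : Rule 2 (comp R (pair x y)) y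
  | r3 (x y z : Term) : Rule 3 (comp (pair x y) z) (pair (comp x z) (comp y z))
  | r4 (x : Term) : Rule 4 (comp I x) x
  | r5 (x : Term) : Rule 5 (comp x I) x
  | r6 (x : Term) : Rule 6 (pair (comp L x) (comp R x)) x
  | r7 : Rule 7 (pair L R) I

/-- The congruence generated by associativity of `comp`. -/
inductive AssocEq : Term → Term → Prop
  | assoc (a b c : Term) : AssocEq (comp (comp a b) c) (comp a (comp b c))
  | refl (a : Term) : AssocEq a a
  | symm {a b : Term} : AssocEq a b → AssocEq b a
  | trans {a b c : Term} : AssocEq a b → AssocEq b c → AssocEq a c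
  | comp_congr {a a' b b' : Term} :
      AssocEq a a' → AssocEq b b' → AssocEq (comp a b) (comp a' b')
  | pair_congr {a a' b b' : Term} :
      AssocEq a a' → AssocEq b b' → AssocEq (pair a b) (pair a' b')

/-- One-step rewriting by a rule whose index lies in `J`,
closed under replacement of subterms (monotone closure). -/
inductive Step (J : Set ℕ) : Term → Term → Prop
  | rule {n : ℕ} {x y : Term} : n ∈ J → Rule n x y → Step J x y
  | comp_left {a a' b : Term} : Step J a a' → Step J (comp a b) (comp a' b)
  | comp_right {a b b' : Term} : Step J b b' → Step J (comp a b) (comp a b')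
  | pair_left {a a' b : Term} : Step J a a' → Step J (pair a b) (pair a' b)
  | pair_right {a b b' : Term} : Step J b b' → Step J (pair a b) (pair a b')

/-- One-step rewriting modulo associativity. -/
def StepA (J : Set ℕ) (a b : Term) : Prop :=
  ∃ a' b', AssocEq a a' ∧ Step J a' b' ∧ AssocEq b' b

/-- Many-step rewriting `↠_J`: the monotone reflexive transitive closure of
one-step rewriting by the rules in `J`, modulo associativity. -/
def Red (J : Set ℕ) (a b : Term) : Prop :=
  ∃ c, Relation.ReflTransGen (StepA J) a c ∧ AssocEq c b

/-- `a` is in normal form w.r.t. the rules in `J` (modulo associativity). -/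
def NF (J : Set ℕ) (a : Term) : Prop := ∀ b, ¬ StepA J a b

/-- Rules (1)-(7). -/
def rules17 : Set ℕ := {n | 1 ≤ n ∧ n ≤ 7}
/-- Rules (1)-(5). -/
def rules15 : Set ℕ := {n | 1 ≤ n ∧ n ≤ 5}
/-- Rules (1)-(4). -/
def rules14 : Set ℕ := {n | 1 ≤ n ∧ n ≤ 4}
/-- Rules (5), (6), (7). -/
def rules567 : Set ℕ := {5, 6, 7}

/-- The congruence `=_CM` generated by the Cartesian monoid axioms (i)-(iv)
and the monoid axioms for `comp` with unit `I`. -/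
inductive CMEq : Term → Term → Prop
  | proj_left (f g : Term) : CMEq (comp L (pair f g)) f
  | proj_right (f g : Term) : CMEq (comp R (pair f g)) g
  | lift (f g h : Term) : CMEq (comp (pair f g) h) (pair (comp f h) (comp g h))
  | surj : CMEq (pair L R) I
  | assoc (a b c : Term) : CMEq (comp (comp a b) c) (comp a (comp b c))
  | one_mul (a : Term) : CMEq (comp I a) a
  | mul_one (a : Term) : CMEq (comp a I) a
  | refl (a : Term) : CMEq a a
  | symm {a b : Term} : CMEq a b → CMEq b a
  | trans {a b c : Term} : CMEq a b → CMEq b c → CMEq a c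
  | comp_congr {a a' b b' : Term} :
      CMEq a a' → CMEq b b' → CMEq (comp a b) (comp a' b')
  | pair_congr {a a' b b' : Term} :
      CMEq a a' → CMEq b b' → CMEq (pair a b) (pair a' b')

/-- The congruence `=_CQ` generated by the axioms (i)-(iii)
and the monoid axioms (no surjectivity `⟨L,R⟩ = I`). -/
inductive CQEq : Term → Term → Prop
  | proj_left (f g : Term) : CQEq (comp L (pair f g)) f
  | proj_right (f g : Term) : CQEq (comp R (pair f g)) g
  | lift (f g h : Term) : CQEq (comp (pair f g) h) (pair (comp f h) (comp g h))
  | assoc (a b c : Term) : CQEq (comp (comp a b) c) (comp a (comp b c))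
  | one_mul (a : Term) : CQEq (comp I a) a
  | mul_one (a : Term) : CQEq (comp a I) a
  | refl (a : Term) : CQEq a a
  | symm {a b : Term} : CQEq a b → CQEq b a
  | trans {a b c : Term} : CQEq a b → CQEq b c → CQEq a c
  | comp_congr {a a' b b' : Term} :
      CQEq a a' → CQEq b b' → CQEq (comp a b) (comp a' b')
  | pair_congr {a a' b b' : Term} :
      CQEq a a' → CQEq b b' → CQEq (pair a b) (pair a' b')

/-- An injective numerical encoding of terms, used to state computability. -/
def encodeTerm : Term → ℕ
  | I => 0
  | L => 1
  | R => 2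
  | comp a b => 2 * Nat.pair (encodeTerm a) (encodeTerm b) + 3
  | pair a b => 2 * Nat.pair (encodeTerm a) (encodeTerm b) + 4

/-- A numerical encoding of finite lists of terms. -/
def encodeTermList : List Term → ℕ
  | [] => 0
  | a :: l => Nat.pair (encodeTerm a) (encodeTermList l) + 1

/-- The product of a list of terms (with `I` as the empty product). -/
def listProd : List Term → Term
  | [] => I
  | a :: l => comp a (listProd l)

/-- `=_CQ` as a setoid. -/
def cqSetoid : Setoid Term :=
  ⟨CQEq, ⟨fun a => CQEq.refl a, fun h => h.symm, fun h₁ h₂ => h₁.trans h₂⟩⟩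

/-- The free categorical quasiproduct monoid `CQ = T / =_CQ`. -/
def CQ : Type := Quotient cqSetoid

/-- `=_CM` as a setoid. -/
def cmSetoid : Setoid Term :=
  ⟨CMEq, ⟨fun a => CMEq.refl a, fun h => h.symm, fun h₁ h₂ => h₁.trans h₂⟩⟩

/-- The free Cartesian monoid `CM = T / =_CM`. -/
def CM : Type := Quotient cmSetoid

/-- The submonoid of `CQ` generated by (the classes of) the members of `B`,
as a set of elements of `CQ`. -/
def genSubmonoidCQ (B : List Term) : Set CQ :=
  {x | ∃ l : List Term, (∀ t ∈ l, t ∈ B) ∧ Quotient.mk cqSetoid (listProd l) = x}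

/-- The submonoid of `CM` generated by (the classes of) the members of `B`,
as a set of elements of `CM`. -/
def genSubmonoidCM (B : List Term) : Set CM :=
  {x | ∃ l : List Term, (∀ t ∈ l, t ∈ B) ∧ Quotient.mk cmSetoid (listProd l) = x}

/-- A shift: a product (under `comp`) of copies of `L` and `R`,
with `I` as the empty product. -/
inductive IsShift : Term → Prop
  | unit : IsShift I
  | left : IsShift L
  | right : IsShift R
  | comp {s t : Term} : IsShift s → IsShift t → IsShift (comp s t)

/-- The CQ normal form (normal form w.r.t. rules (1)-(5)) of `X` is a shift. -/
def nfIsShift (X : Term) : Prop :=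
  ∃ N, Red rules15 X N ∧ NF rules15 N ∧ IsShift N

/-- The product `F_0 * ⋯ * F_{n-1}` of the first `n` values of a sequence. -/
def prodTake (f : ℕ → Term) (n : ℕ) : Term := listProd ((List.range n).map f)

/-- `B` covers Cantor space: there is an infinite sequence of members of `B`
such that for each shift `S` some finite initial product composed with `S`
has a CQ normal form that is not a shift. -/
def Covers (B : List Term) : Prop :=
  ∃ f : ℕ → Term, (∀ n, f n ∈ B) ∧
    ∀ S, IsShift S → ∃ n, ¬ nfIsShift (comp S (prodTake f n))

/-- The shift `S` is bad for `B`: for every finite sequence of members of `B`,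
the CQ normal form of `S*F_1*⋯*F_n` is a shift. -/
def BadFor (B : List Term) (S : Term) : Prop :=
  ∀ l : List Term, (∀ t ∈ l, t ∈ B) → nfIsShift (comp S (listProd l))

/-- The length of a shift: the number of occurrences of `L` and `R`. -/
def lenLR : Term → ℕ
  | I => 0
  | L => 1
  | R => 1
  | comp a b => lenLR a + lenLR b
  | pair a b => lenLR a + lenLR b

/-- `S` is extenuative for `B`: it is bad for `B` and the CQ normal forms of
`S*F_1*⋯*F_k` (for `F_i` in `B`) have unbounded length. -/
def Extenuative (B : List Term) (S : Term) : Prop :=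
  BadFor B S ∧ ∀ n : ℕ, ∃ l : List Term, (∀ t ∈ l, t ∈ B) ∧
    ∃ N, Red rules15 (comp S (listProd l)) N ∧ NF rules15 N ∧ n ≤ lenLR N

/-- A term represents a right invertible element of CM. -/
def RightInvCM (F : Term) : Prop := ∃ G, CMEq (comp F G) I

/-! ### Auxiliary development: a normalization function for rules (1)-(5) -/

/-- Canonical composition on normal forms. -/
def compNF : Term → Term → Term
  | I, c => c
  | L, pair a _ => a
  | L, I => L
  | L, c => comp L c
  | R, pair _ b => b
  | R, I => R
  | R, c => comp R c
  | comp x y, c => compNF x (compNF y c)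
  | pair a b, c => pair (compNF a c) (compNF b c)

/-- Normalization function for rules (1)-(5). -/
def nrm : Term → Term
  | I => I
  | L => L
  | R => R
  | comp a b => compNF (nrm a) (nrm b)
  | pair a b => pair (nrm a) (nrm b)

theorem compNF_assoc (a b c : Term) :
    compNF (compNF a b) c = compNF a (compNF b c) := by
  induction a generalizing b c with
  | I => rfl
  | L => cases b <;> simp [compNF]
  | R => cases b <;> simp [compNF]
  | comp x y ihx ihy => simp [compNF, ihx, ihy]
  | pair p q ihp ihq => simp [compNF, ihp, ihq]

/-- Canonical nonempty shifts. -/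
inductive CanonS : Term → Prop
  | L : CanonS L
  | R : CanonS R
  | compL {y : Term} : CanonS y → CanonS (comp L y)
  | compR {y : Term} : CanonS y → CanonS (comp R y)

/-- Canonical normal forms. -/
inductive Canon : Term → Prop
  | unit : Canon I
  | sh {s : Term} : CanonS s → Canon s
  | pair {a b : Term} : Canon a → Canon b → Canon (pair a b)

theorem compNF_L_canonS {s : Term} (h : CanonS s) : compNF L s = comp L s := by
  cases h <;> rfl

theorem compNF_R_canonS {s : Term} (h : CanonS s) : compNF R s = comp R s := by
  cases h <;> rfl

theorem canon_compNF {a b : Term} (ha : Canon a) (hb : Canon b) :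
    Canon (compNF a b) := by
  induction a generalizing b with
  | I => exact hb
  | L =>
    rcases hb with _ | hs | ⟨hp, hq⟩
    · exact Canon.sh CanonS.L
    · rw [compNF_L_canonS hs]; exact Canon.sh (CanonS.compL hs)
    · exact hp
  | R =>
    rcases hb with _ | hs | ⟨hp, hq⟩
    · exact Canon.sh CanonS.R
    · rw [compNF_R_canonS hs]; exact Canon.sh (CanonS.compR hs)
    · exact hq
  | comp x y ihx ihy =>
    rcases ha with _ | hs
    rcases hs with _ | _ | hy | hy
    · exact ihx (Canon.sh CanonS.L) (ihy (Canon.sh hy) hb)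
    · exact ihx (Canon.sh CanonS.R) (ihy (Canon.sh hy) hb)
  | pair p q ihp ihq =>
    rcases ha with _ | hs | ⟨hp, hq⟩
    · cases hs
    · exact Canon.pair (ihp hp hb) (ihq hq hb)

theorem canon_nrm (t : Term) : Canon (nrm t) := by
  induction t with
  | I => exact Canon.unit
  | L => exact Canon.sh CanonS.L
  | R => exact Canon.sh CanonS.R
  | comp a b iha ihb => exact canon_compNF iha ihb
  | pair a b iha ihb => exact Canon.pair iha ihb

/-- Any association of a nonempty word over L,R. -/
inductive GoodS : Term → Prop
  | L : GoodS L
  | R : GoodS R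
  | comp {a b : Term} : GoodS a → GoodS b → GoodS (comp a b)

/-- Terms with no redex, closed under associativity. -/
inductive Good : Term → Prop
  | unit : Good I
  | sh {s : Term} : GoodS s → Good s
  | pair {a b : Term} : Good a → Good b → Good (pair a b)

theorem goodS_comp_iff {a b : Term} : GoodS (comp a b) ↔ GoodS a ∧ GoodS b := by
  constructor
  · intro h; cases h; exact ⟨‹_›, ‹_›⟩
  · rintro ⟨h1, h2⟩; exact GoodS.comp h1 h2

theorem not_goodS_I : ¬ GoodS I := by intro h; cases h
theorem not_goodS_pair {a b : Term} : ¬ GoodS (pair a b) := by intro h; cases h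

theorem good_comp_iff {a b : Term} : Good (comp a b) ↔ GoodS a ∧ GoodS b := by
  constructor
  · intro h
    rcases h with _ | hs
    exact goodS_comp_iff.mp hs
  · rintro ⟨h1, h2⟩; exact Good.sh (GoodS.comp h1 h2)

theorem good_pair_iff {a b : Term} : Good (pair a b) ↔ Good a ∧ Good b := by
  constructor
  · intro h
    rcases h with _ | hs | ⟨h1, h2⟩
    · exact absurd hs not_goodS_pair
    · exact ⟨h1, h2⟩
  · rintro ⟨h1, h2⟩; exact Good.pair h1 h2

theorem goodS_assocEq {a b : Term} (h : AssocEq a b) : GoodS a ↔ GoodS b := by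
  induction h with
  | assoc a b c => simp [goodS_comp_iff, and_assoc]
  | refl => rfl
  | symm _ ih => exact ih.symm
  | trans _ _ ih1 ih2 => exact ih1.trans ih2
  | comp_congr _ _ ih1 ih2 => simp [goodS_comp_iff, ih1, ih2]
  | pair_congr _ _ _ _ => simp [not_goodS_pair]

theorem good_assocEq {a b : Term} (h : AssocEq a b) : Good a ↔ Good b := by
  induction h with
  | assoc a b c => simp [good_comp_iff, goodS_comp_iff, and_assoc]
  | refl => rfl
  | symm _ ih => exact ih.symm
  | trans _ _ ih1 ih2 => exact ih1.trans ih2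
  | comp_congr h1 h2 _ _ => simp [good_comp_iff, goodS_assocEq h1, goodS_assocEq h2]
  | pair_congr _ _ ih1 ih2 => simp [good_pair_iff, ih1, ih2]

theorem good_no_step {a b : Term} (hg : Good a) (h : Step rules15 a b) : False := by
  induction h with
  | rule hn hr =>
    cases hr with
    | r1 x y => exact absurd (good_comp_iff.mp hg).2 not_goodS_pair
    | r2 x y => exact absurd (good_comp_iff.mp hg).2 not_goodS_pair
    | r3 x y z => exact absurd (good_comp_iff.mp hg).1 not_goodS_pair
    | r4 x => exact absurd (good_comp_iff.mp hg).1 not_goodS_I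
    | r5 x => exact absurd (good_comp_iff.mp hg).2 not_goodS_I
    | r6 x => simp [rules15] at hn
    | r7 => simp [rules15] at hn
  | comp_left _ ih => exact ih (Good.sh (good_comp_iff.mp hg).1)
  | comp_right _ ih => exact ih (Good.sh (good_comp_iff.mp hg).2)
  | pair_left _ ih => exact ih (good_pair_iff.mp hg).1
  | pair_right _ ih => exact ih (good_pair_iff.mp hg).2

theorem canonS_goodS {s : Term} (h : CanonS s) : GoodS s := by
  induction h with
  | L => exact GoodS.L
  | R => exact GoodS.R
  | compL _ ih => exact GoodS.comp GoodS.L ih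
  | compR _ ih => exact GoodS.comp GoodS.R ih

theorem canon_good {a : Term} (h : Canon a) : Good a := by
  induction h with
  | unit => exact Good.unit
  | sh hs => exact Good.sh (canonS_goodS hs)
  | pair _ _ ih1 ih2 => exact Good.pair ih1 ih2

theorem canon_NF {a : Term} (h : Canon a) : NF rules15 a := by
  rintro b ⟨a', b', h1, h2, h3⟩
  exact good_no_step ((good_assocEq h1).mp (canon_good h)) h2

/-! ### Invariance of `nrm` under rewriting -/

theorem compNF_I {a : Term} (h : Canon a) : compNF a I = a := by
  induction h with
  | unit => rfl
  | @sh s hs =>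
    induction hs with
    | L => rfl
    | R => rfl
    | @compL y hy ih =>
      show compNF L (compNF y I) = comp L y
      rw [ih, compNF_L_canonS hy]
    | @compR y hy ih =>
      show compNF R (compNF y I) = comp R y
      rw [ih, compNF_R_canonS hy]
  | pair _ _ ih1 ih2 =>
    show pair (compNF _ I) (compNF _ I) = _
    rw [ih1, ih2]

theorem canonS_nrm_idem {s : Term} (hs : CanonS s) : nrm s = s := by
  induction hs with
  | L => rfl
  | R => rfl
  | @compL y hy ih =>
    show compNF (nrm L) (nrm y) = comp L y
    rw [ih]; exact compNF_L_canonS hy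
  | @compR y hy ih =>
    show compNF (nrm R) (nrm y) = comp R y
    rw [ih]; exact compNF_R_canonS hy

theorem canon_nrm_idem {a : Term} (h : Canon a) : nrm a = a := by
  induction h with
  | unit => rfl
  | sh hs => exact canonS_nrm_idem hs
  | pair _ _ ih1 ih2 => show pair (nrm _) (nrm _) = _; rw [ih1, ih2]

theorem assocEq_nrm {a b : Term} (h : AssocEq a b) : nrm a = nrm b := by
  induction h with
  | assoc a b c => exact compNF_assoc (nrm a) (nrm b) (nrm c)
  | refl => rfl
  | symm _ ih => exact ih.symm
  | trans _ _ ih1 ih2 => exact ih1.trans ih2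
  | comp_congr _ _ ih1 ih2 => show compNF _ _ = compNF _ _; rw [ih1, ih2]
  | pair_congr _ _ ih1 ih2 => show pair _ _ = pair _ _; rw [ih1, ih2]

theorem step_nrm {a b : Term} (h : Step rules15 a b) : nrm a = nrm b := by
  induction h with
  | rule hn hr =>
    cases hr with
    | r1 x y => rfl
    | r2 x y => rfl
    | r3 x y z => rfl
    | r4 x => rfl
    | r5 x => exact compNF_I (canon_nrm _)
    | r6 x => simp [rules15] at hn
    | r7 => simp [rules15] at hn
  | comp_left _ ih => show compNF _ _ = compNF _ _; rw [ih]
  | comp_right _ ih => show compNF _ _ = compNF _ _; rw [ih]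
  | pair_left _ ih => show pair _ _ = pair _ _; rw [ih]
  | pair_right _ ih => show pair _ _ = pair _ _; rw [ih]

theorem stepA_nrm {a b : Term} (h : StepA rules15 a b) : nrm a = nrm b := by
  obtain ⟨a', b', h1, h2, h3⟩ := h
  exact (assocEq_nrm h1).trans ((step_nrm h2).trans (assocEq_nrm h3))

theorem red_nrm {a b : Term} (h : Red rules15 a b) : nrm a = nrm b := by
  obtain ⟨c, hc, h2⟩ := h
  have : nrm a = nrm c := by
    clear h2
    induction hc with
    | refl => rfl
    | tail _ hs ih => exact ih.trans (stepA_nrm hs)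
  exact this.trans (assocEq_nrm h2)

/-! ### Reduction to the normal form -/

theorem red_refl {J : Set ℕ} (a : Term) : Red J a a := ⟨a, .refl, .refl a⟩

theorem red_of_assocEq {J : Set ℕ} {a b : Term} (h : AssocEq a b) : Red J a b :=
  ⟨a, .refl, h⟩

theorem stepA_of_assocEq_left {J : Set ℕ} {a b c : Term} (h : AssocEq a b)
    (hs : StepA J b c) : StepA J a c := by
  obtain ⟨x, y, h1, h2, h3⟩ := hs
  exact ⟨x, y, h.trans h1, h2, h3⟩

theorem red_of_assocEq_left {J : Set ℕ} {a b c : Term} (h : AssocEq a b)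
    (hr : Red J b c) : Red J a c := by
  obtain ⟨d, hd, h2⟩ := hr
  rcases hd.cases_head with rfl | ⟨x, hx, hxd⟩
  · exact ⟨a, .refl, h.trans h2⟩
  · exact ⟨d, .head (stepA_of_assocEq_left h hx) hxd, h2⟩

theorem red_trans {J : Set ℕ} {a b c : Term} (h1 : Red J a b) (h2 : Red J b c) :
    Red J a c := by
  obtain ⟨d, hd, hdb⟩ := h1
  obtain ⟨e, he, hec⟩ := red_of_assocEq_left hdb h2
  exact ⟨e, hd.trans he, hec⟩

theorem stepA_comp_left {J : Set ℕ} {a a' b : Term} (h : StepA J a a') :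
    StepA J (comp a b) (comp a' b) := by
  obtain ⟨x, y, h1, h2, h3⟩ := h
  exact ⟨comp x b, comp y b, .comp_congr h1 (.refl b), .comp_left h2, .comp_congr h3 (.refl b)⟩

theorem stepA_comp_right {J : Set ℕ} {a b b' : Term} (h : StepA J b b') :
    StepA J (comp a b) (comp a b') := by
  obtain ⟨x, y, h1, h2, h3⟩ := h
  exact ⟨comp a x, comp a y, .comp_congr (.refl a) h1, .comp_right h2, .comp_congr (.refl a) h3⟩

theorem stepA_pair_left {J : Set ℕ} {a a' b : Term} (h : StepA J a a') :
    StepA J (pair a b) (pair a' b) := by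
  obtain ⟨x, y, h1, h2, h3⟩ := h
  exact ⟨pair x b, pair y b, .pair_congr h1 (.refl b), .pair_left h2, .pair_congr h3 (.refl b)⟩

theorem stepA_pair_right {J : Set ℕ} {a b b' : Term} (h : StepA J b b') :
    StepA J (pair a b) (pair a b') := by
  obtain ⟨x, y, h1, h2, h3⟩ := h
  exact ⟨pair a x, pair a y, .pair_congr (.refl a) h1, .pair_right h2, .pair_congr (.refl a) h3⟩

theorem red_comp {J : Set ℕ} {a a' b b' : Term} (h1 : Red J a a') (h2 : Red J b b') :
    Red J (comp a b) (comp a' b') := by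
  obtain ⟨c, hc, hca⟩ := h1
  obtain ⟨d, hd, hdb⟩ := h2
  refine red_trans ⟨comp c b, ?_, .comp_congr hca (.refl b)⟩
    ⟨comp a' d, ?_, .comp_congr (.refl a') hdb⟩
  · exact Relation.ReflTransGen.lift (fun x => comp x b) (fun _ _ h => stepA_comp_left h) _ _ hc
  · exact Relation.ReflTransGen.lift (fun x => comp a' x) (fun _ _ h => stepA_comp_right h) _ _ hd

theorem red_pair {J : Set ℕ} {a a' b b' : Term} (h1 : Red J a a') (h2 : Red J b b') :
    Red J (pair a b) (pair a' b') := by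
  obtain ⟨c, hc, hca⟩ := h1
  obtain ⟨d, hd, hdb⟩ := h2
  refine red_trans ⟨pair c b, ?_, .pair_congr hca (.refl b)⟩
    ⟨pair a' d, ?_, .pair_congr (.refl a') hdb⟩
  · exact Relation.ReflTransGen.lift (fun x => pair x b) (fun _ _ h => stepA_pair_left h) _ _ hc
  · exact Relation.ReflTransGen.lift (fun x => pair a' x) (fun _ _ h => stepA_pair_right h) _ _ hd

theorem red_of_step {J : Set ℕ} {a b : Term} (h : Step J a b) : Red J a b :=
  ⟨b, .single ⟨a, b, .refl a, h, .refl b⟩, .refl b⟩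

theorem mem_rules15 {n : ℕ} (h1 : 1 ≤ n) (h2 : n ≤ 5) : n ∈ rules15 := ⟨h1, h2⟩

theorem compNF_red (a c : Term) : Red rules15 (comp a c) (compNF a c) := by
  induction a generalizing c with
  | I => exact red_of_step (.rule (mem_rules15 (by norm_num) (by norm_num)) (.r4 c))
  | L =>
    cases c with
    | I => exact red_of_step (.rule (mem_rules15 (by norm_num) (by norm_num)) (.r5 L))
    | pair x y => exact red_of_step (.rule (mem_rules15 (by norm_num) (by norm_num)) (.r1 x y))
    | L => exact red_refl _
    | R => exact red_refl _
    | comp x y => exact red_refl _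
  | R =>
    cases c with
    | I => exact red_of_step (.rule (mem_rules15 (by norm_num) (by norm_num)) (.r5 R))
    | pair x y => exact red_of_step (.rule (mem_rules15 (by norm_num) (by norm_num)) (.r2 x y))
    | L => exact red_refl _
    | R => exact red_refl _
    | comp x y => exact red_refl _
  | comp x y ihx ihy =>
    refine red_trans (red_of_assocEq (.assoc x y c)) ?_
    exact red_trans (red_comp (red_refl x) (ihy c)) (ihx _)
  | pair p q ihp ihq =>
    refine red_trans (red_of_step (.rule (mem_rules15 (by norm_num) (by norm_num)) (.r3 p q c))) ?_
    exact red_pair (ihp c) (ihq c)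

theorem nrm_red (t : Term) : Red rules15 t (nrm t) := by
  induction t with
  | I => exact red_refl _
  | L => exact red_refl _
  | R => exact red_refl _
  | comp a b iha ihb => exact red_trans (red_comp iha ihb) (compNF_red _ _)
  | pair a b iha ihb => exact red_pair iha ihb

theorem nf_assocEq_nrm {a : Term} (h : NF rules15 a) : AssocEq a (nrm a) := by
  obtain ⟨c, hc, h2⟩ := nrm_red a
  rcases hc.cases_head with rfl | ⟨x, hx, _⟩
  · exact h2
  · exact absurd hx (h x)

/-! ### Shifts -/

theorem not_isShift_pair {a b : Term} : ¬ IsShift (pair a b) := by intro h; cases h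

theorem isShift_comp_iff {a b : Term} : IsShift (comp a b) ↔ IsShift a ∧ IsShift b := by
  constructor
  · intro h; cases h; exact ⟨‹_›, ‹_›⟩
  · rintro ⟨h1, h2⟩; exact IsShift.comp h1 h2

theorem isShift_assocEq {a b : Term} (h : AssocEq a b) : IsShift a ↔ IsShift b := by
  induction h with
  | assoc a b c => simp [isShift_comp_iff, and_assoc]
  | refl => rfl
  | symm _ ih => exact ih.symm
  | trans _ _ ih1 ih2 => exact ih1.trans ih2
  | comp_congr _ _ ih1 ih2 => simp [isShift_comp_iff, ih1, ih2]
  | pair_congr _ _ _ _ => simp [not_isShift_pair]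

theorem nfIsShift_iff (X : Term) : nfIsShift X ↔ IsShift (nrm X) := by
  constructor
  · rintro ⟨N, hr, hnf, hsh⟩
    rw [red_nrm hr]
    exact (isShift_assocEq (nf_assocEq_nrm hnf)).mp hsh
  · intro h
    exact ⟨nrm X, nrm_red X, canon_NF (canon_nrm X), h⟩

theorem isShift_compNF {a b : Term} (ha : IsShift a) (hb : IsShift b) :
    IsShift (compNF a b) := by
  induction ha generalizing b with
  | unit => exact hb
  | left =>
    cases b with
    | pair x y => exact absurd hb not_isShift_pair
    | I => exact IsShift.left
    | L => exact IsShift.comp IsShift.left hb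
    | R => exact IsShift.comp IsShift.left hb
    | comp x y => exact IsShift.comp IsShift.left hb
  | right =>
    cases b with
    | pair x y => exact absurd hb not_isShift_pair
    | I => exact IsShift.right
    | L => exact IsShift.comp IsShift.right hb
    | R => exact IsShift.comp IsShift.right hb
    | comp x y => exact IsShift.comp IsShift.right hb
  | comp hs ht ihs iht => exact ihs (iht hb)

theorem isShift_nrm {S : Term} (h : IsShift S) : IsShift (nrm S) := by
  induction h with
  | unit => exact IsShift.unit
  | left => exact IsShift.left
  | right => exact IsShift.right
  | comp _ _ ih1 ih2 => exact isShift_compNF ih1 ih2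

/-- A letter. -/
def ltr : Bool → Term
  | true => L
  | false => R

/-- The canonical shift corresponding to a word. -/
def shw : List Bool → Term
  | [] => I
  | [b] => ltr b
  | b :: w => comp (ltr b) (shw w)

theorem shw_cons {b : Bool} {w : List Bool} (h : w ≠ []) :
    shw (b :: w) = comp (ltr b) (shw w) := by
  cases w with
  | nil => exact absurd rfl h
  | cons c w' => cases b <;> rfl

theorem canonS_shw {s : Term} (h : CanonS s) : ∃ w, shw w = s := by
  induction h with
  | L => exact ⟨[true], rfl⟩
  | R => exact ⟨[false], rfl⟩
  | @compL y hy ih =>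
    obtain ⟨w, hw⟩ := ih
    have hne : w ≠ [] := by rintro rfl; rw [← hw] at hy; cases hy
    exact ⟨true :: w, by rw [shw_cons hne, hw]; rfl⟩
  | @compR y hy ih =>
    obtain ⟨w, hw⟩ := ih
    have hne : w ≠ [] := by rintro rfl; rw [← hw] at hy; cases hy
    exact ⟨false :: w, by rw [shw_cons hne, hw]; rfl⟩

theorem canon_shift_shw {a : Term} (hc : Canon a) (hs : IsShift a) : ∃ w, shw w = a := by
  rcases hc with _ | h | ⟨_, _⟩
  · exact ⟨[], rfl⟩
  · exact canonS_shw h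
  · exact absurd hs not_isShift_pair

theorem nrm_listProd_append (P l : List Term) :
    nrm (listProd (P ++ l)) = compNF (nrm (listProd P)) (nrm (listProd l)) := by
  induction P with
  | nil => rfl
  | cons a P ih =>
    show compNF (nrm a) (nrm (listProd (P ++ l))) = compNF (compNF (nrm a) (nrm (listProd P))) _
    rw [ih, compNF_assoc]
/-- Content of the proof of Theorem 5: a finite set `B` of terms in CQ normal
form covers Cantor space if and only if no shift is bad for `B`. -/
theorem covers_iff_no_bad_shift (B : List Term) (hB : ∀ t ∈ B, NF rules15 t) :
    Covers B ↔ ¬ ∃ S : Term, IsShift S ∧ BadFor B S := by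
  classical
  constructor
  · rintro ⟨f, hfB, hf⟩ ⟨S, hS, hbad⟩
    obtain ⟨n, hn⟩ := hf S hS
    exact hn (hbad ((List.range n).map f) (by
      intro t ht
      obtain ⟨i, _, rfl⟩ := List.mem_map.mp ht
      exact hfB i))
  · intro H
    by_cases hBe : B = []
    · exfalso
      apply H
      refine ⟨I, IsShift.unit, fun l hl => ?_⟩
      have hl0 : l = [] := by
        cases l with
        | nil => rfl
        | cons a t => exact absurd (hl a (by simp)) (by simp [hBe])
      subst hl0
      rw [nfIsShift_iff]
      exact IsShift.unit
    · obtain ⟨b₀, hb₀⟩ : ∃ b, b ∈ B := by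
        cases B with
        | nil => exact absurd rfl hBe
        | cons a t => exact ⟨a, by simp⟩
      have H' : ∀ S, IsShift S → ∃ l, (∀ t ∈ l, t ∈ B) ∧
          ¬ IsShift (nrm (comp S (listProd l))) := by
        intro S hS
        by_contra hc
        push_neg at hc
        exact H ⟨S, hS, fun l hl => (nfIsShift_iff _).mpr (hc l hl)⟩
      choose g hg1 hg2 using H'
      set g' : Term → List Term := fun S => if h : IsShift S then g S h else [] with hg'
      set u : ℕ → List Bool := fun n => (Encodable.decode (α := List Bool) n).getD [] with hu
      set P : ℕ → List Term := fun k =>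
        Nat.rec [] (fun k Pk => Pk ++ g' (nrm (comp (shw (u k)) (listProd Pk))) ++ [b₀]) k
        with hP
      have hPsucc : ∀ k, P (k+1) = P k ++ g' (nrm (comp (shw (u k)) (listProd (P k)))) ++ [b₀] :=
        fun k => rfl
      have hg'mem : ∀ S, ∀ t ∈ g' S, t ∈ B := by
        intro S t ht
        by_cases h : IsShift S
        · have he : g' S = g S h := dif_pos h
          rw [he] at ht; exact hg1 S h t ht
        · have he : g' S = [] := dif_neg h
          rw [he] at ht; simp at ht
      have hPmem : ∀ k, ∀ t ∈ P k, t ∈ B := by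
        intro k
        induction k with
        | zero => intro t ht; simp [hP] at ht
        | succ k ih =>
          intro t ht
          rw [hPsucc k] at ht
          rcases List.mem_append.mp ht with h | h
          · rcases List.mem_append.mp h with h | h
            · exact ih t h
            · exact hg'mem _ t h
          · simp at h; subst h; exact hb₀
      have hPlen : ∀ k, k ≤ (P k).length := by
        intro k
        induction k with
        | zero => simp
        | succ k ih => rw [hPsucc k]; simp; omega
      have hPpre : ∀ k m, k ≤ m → P k <+: P m := by
        intro k m hkm
        induction m with
        | zero => have : k = 0 := by omega
                  subst this; exact List.prefix_refl _
        | succ m ih =>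
          rcases Nat.lt_or_ge k (m+1) with h | h
          · refine (ih (by omega)).trans ?_
            rw [hPsucc m]
            exact ⟨g' (nrm (comp (shw (u m)) (listProd (P m)))) ++ [b₀], by simp⟩
          · have : k = m + 1 := by omega
            subst this; exact List.prefix_refl _
      set f : ℕ → Term := fun n => (P (n+1)).getD n b₀ with hf
      have hfget : ∀ n, f n = (P (n+1)).getD n b₀ := fun n => rfl
      have key : ∀ (Q : List Term) (m : ℕ), Q <+: P m →
          (List.range Q.length).map f = Q := by
        intro Q m hQ
        apply List.ext_getElem
        · simp
        · intro i h1 h2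
          simp only [List.getElem_map, List.getElem_range]
          have hiQ : i < Q.length := by simpa using h2
          set m' := max m (i+1) with hm'
          have hQm' : Q <+: P m' := hQ.trans (hPpre m m' (le_max_left _ _))
          have hPm' : P (i+1) <+: P m' := hPpre (i+1) m' (le_max_right _ _)
          have hi1 : i < (P (i+1)).length := by have := hPlen (i+1); omega
          have e1 : f i = (P (i+1))[i] := by
            rw [hfget, List.getD_eq_getElem _ _ hi1]
          have e2 := hPm'.getElem hi1
          have e3 := hQm'.getElem hiQ
          rw [e1, e2, ← e3]
      refine ⟨f, ?_, ?_⟩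
      · intro n
        have hn : n < (P (n+1)).length := by have := hPlen (n+1); omega
        rw [hfget, List.getD_eq_getElem _ _ hn]
        exact hPmem (n+1) _ (List.getElem_mem _)
      · intro S hS
        obtain ⟨w, hw⟩ := canon_shift_shw (canon_nrm S) (isShift_nrm hS)
        set k := Encodable.encode w with hk
        have huk : u k = w := by rw [hu]; simp [hk]
        set T := nrm (comp (shw (u k)) (listProd (P k))) with hT
        have hTeq : T = compNF (nrm S) (nrm (listProd (P k))) := by
          rw [hT]
          show compNF (nrm (shw (u k))) (nrm (listProd (P k))) = _
          rw [huk, hw, canon_nrm_idem (canon_nrm S)]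
        refine ⟨(P k ++ g' T).length, ?_⟩
        rw [nfIsShift_iff]
        have hQpre : P k ++ g' T <+: P (k+1) := by
          rw [hPsucc k, ← hT]
          exact ⟨[b₀], rfl⟩
        have hQ : prodTake f (P k ++ g' T).length = listProd (P k ++ g' T) := by
          rw [prodTake, key _ (k+1) hQpre]
        rw [hQ]
        have hmain : nrm (comp S (listProd (P k ++ g' T)))
            = compNF T (nrm (listProd (g' T))) := by
          show compNF (nrm S) (nrm (listProd (P k ++ g' T))) = _
          rw [nrm_listProd_append, ← compNF_assoc, ← hTeq]
        rw [hmain]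
        by_cases h : IsShift T
        · have hgT : g' T = g T h := dif_pos h
          rw [hgT]
          have h2 := hg2 T h
          have hTT : nrm T = T := by rw [hT]; exact canon_nrm_idem (canon_nrm _)
          have : nrm (comp T (listProd (g T h))) = compNF T (nrm (listProd (g T h))) := by
            show compNF (nrm T) _ = _
            rw [hTT]
          rw [this] at h2
          exact h2
        · have hgT : g' T = [] := dif_neg h
          rw [hgT]
          show ¬ IsShift (compNF T (nrm I))
          have : compNF T (nrm I) = T := by
            show compNF T I = T
            rw [hT]
            exact compNF_I (canon_nrm _)
          rw [this]
          exact h
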